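/- If R is an NC-complete algebra (complete with respect to the commutator filtration) and R_ab is a local ring, then R is a local ring. -/

import Mathlib

/-- The lower central series of an associative algebra `R` viewed as a Lie algebra via
`[a,b] = a*b - b*a`.  Here `lcs R k` corresponds to `L_{k+1}`, so that elements of `lcs R k`
are spanned by iterated commutators containing `k` bracket pairs; `lcs R 0 = R`. -/
def lcs (R : Type) [Ring R] [Algebra ℂ R] : ℕ → Submodule ℂ R
  | 0 => ⊤
  | n + 1 => Submodule.span ℂ {x : R | ∃ a : R, ∃ b ∈ lcs R n, x = a * b - b * a}

/-- The commutator (NC-) filtration: `ncF R d` is spanned by all products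
`c₁ ⋯ c_m` where `c_j` is an iterated commutator with `k_j` bracket pairs and
`k₁ + ⋯ + k_m = d` (factors with `k_j = 0` are arbitrary elements of `R`).
This is the two-sided ideal `F^d R = Σ R·L_{i₁}·R ⋯ R·L_{i_m}·R`. -/
def ncF (R : Type) [Ring R] [Algebra ℂ R] (d : ℕ) : Submodule ℂ R :=
  Submodule.span ℂ {x : R | ∃ l : List (ℕ × R), (l.map Prod.fst).sum = d ∧
    (∀ q ∈ l, q.2 ∈ lcs R q.1) ∧ x = (l.map Prod.snd).prod}

/-- The ring congruence generated by identifying `x*y` with `y*x`; the quotient is the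
abelianization `R_ab = R/[R,R]`. -/
def abRingCon (R : Type) [Ring R] : RingCon R :=
  ringConGen fun a b : R => ∃ x y : R, a = x * y ∧ b = y * x

/-- The abelianization `R_ab` of an associative ring `R`. -/
def RingAb (R : Type) [Ring R] : Type := (abRingCon R).Quotient

instance (R : Type) [Ring R] : Ring (RingAb R) :=
  inferInstanceAs (Ring (abRingCon R).Quotient)

section Aux

variable (R : Type) [Ring R] [Algebra ℂ R]

lemma mem_ncF_of_gen {d : ℕ} {x : R} (l : List (ℕ × R)) (h1 : (l.map Prod.fst).sum = d)
    (h2 : ∀ q ∈ l, q.2 ∈ lcs R q.1) (h3 : x = (l.map Prod.snd).prod) : x ∈ ncF R d :=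
  Submodule.subset_span ⟨l, h1, h2, h3⟩

lemma ncF_zero : ncF R 0 = ⊤ := by
  rw [eq_top_iff]
  intro x _
  refine mem_ncF_of_gen R [(0, x)] (by simp) ?_ (by simp)
  rintro q hq
  simp only [List.mem_singleton] at hq
  subst hq
  exact Submodule.mem_top

lemma ncF_mul_le (a b : ℕ) : ncF R a * ncF R b ≤ ncF R (a + b) := by
  rw [ncF, ncF, Submodule.span_mul_span]
  refine Submodule.span_le.2 ?_
  rintro z hz
  rw [Set.mem_mul] at hz
  obtain ⟨x, ⟨l1, h1, h2, rfl⟩, y, ⟨l2, g1, g2, rfl⟩, rfl⟩ := hz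
  refine Submodule.subset_span ⟨l1 ++ l2, by simp [h1, g1], ?_, by simp⟩
  intro q hq
  rcases List.mem_append.1 hq with h | h
  · exact h2 q h
  · exact g2 q h

lemma ncF_mul_mem {a b : ℕ} {x y : R} (hx : x ∈ ncF R a) (hy : y ∈ ncF R b) :
    x * y ∈ ncF R (a + b) :=
  ncF_mul_le R a b (Submodule.mul_mem_mul hx hy)

lemma ncF_mul_mem_left {d : ℕ} (r : R) {x : R} (hx : x ∈ ncF R d) : r * x ∈ ncF R d := by
  have hr : r ∈ ncF R 0 := by rw [ncF_zero]; exact Submodule.mem_top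
  simpa using ncF_mul_mem R hr hx

lemma ncF_mul_mem_right {d : ℕ} (r : R) {x : R} (hx : x ∈ ncF R d) : x * r ∈ ncF R d := by
  have hr : r ∈ ncF R 0 := by rw [ncF_zero]; exact Submodule.mem_top
  simpa using ncF_mul_mem R hx hr

lemma comm_mem_ncF_one (x y : R) : x * y - y * x ∈ ncF R 1 := by
  have h : x * y - y * x ∈ lcs R 1 := by
    rw [lcs]
    exact Submodule.subset_span ⟨x, y, Submodule.mem_top, rfl⟩
  refine mem_ncF_of_gen R [(1, x * y - y * x)] (by simp) ?_ (by simp)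
  rintro q hq
  simp only [List.mem_singleton] at hq
  subst hq
  exact h

/-- The ring congruence `a ~ b ↔ a - b ∈ F¹R`. -/
def modF1 : RingCon R where
  r a b := a - b ∈ ncF R 1
  iseqv := by
    refine ⟨fun a => by simp, fun {a b} h => ?_, fun {a b c} h1 h2 => ?_⟩
    · simpa using (ncF R 1).neg_mem h
    · simpa using (ncF R 1).add_mem h1 h2
  add' := by
    intro w x y z h1 h2
    show (w + y) - (x + z) ∈ ncF R 1
    have e : (w + y) - (x + z) = (w - x) + (y - z) := by abel
    rw [e]
    exact (ncF R 1).add_mem h1 h2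
  mul' := by
    intro w x y z h1 h2
    have h3 : w * (y - z) ∈ ncF R 1 := ncF_mul_mem_left R w h2
    have h4 : (w - x) * z ∈ ncF R 1 := ncF_mul_mem_right R z h1
    show w * y - x * z ∈ ncF R 1
    have e : w * y - x * z = w * (y - z) + (w - x) * z := by noncomm_ring
    rw [e]
    exact (ncF R 1).add_mem h3 h4

lemma ab_sub_mem {a b : R} (h : abRingCon R a b) : a - b ∈ ncF R 1 := by
  have hle : abRingCon R ≤ modF1 R := by
    refine RingCon.ringConGen_le.2 ?_
    rintro x y ⟨u, v, rfl, rfl⟩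
    exact comm_mem_ncF_one R u v
  exact hle h

end Aux

/-- If `R` is NC-complete (Hausdorff and complete with respect to the commutator filtration)
and its abelianization `R_ab` is a local ring, then `R` is a local ring. -/
theorem isLocalRing_of_nc_complete
    (R : Type) [Ring R] [Algebra ℂ R]
    (hHaus : ∀ x : R, (∀ d, x ∈ ncF R d) → x = 0)
    (hCompl : ∀ f : ℕ → R, (∀ d, f (d + 1) - f d ∈ ncF R d) →
      ∃ x, ∀ d, x - f d ∈ ncF R d)
    (hloc : IsLocalRing (RingAb R)) :
    IsLocalRing R := by
  -- Step 1: 1 - t is a unit whenever t ∈ F¹R.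
  have key : ∀ t : R, t ∈ ncF R 1 → IsUnit (1 - t) := by
    intro t ht
    have hpow : ∀ d, t ^ d ∈ ncF R d := by
      intro d
      induction d with
      | zero => rw [pow_zero, ncF_zero]; exact Submodule.mem_top
      | succ n ih => rw [pow_succ]; exact ncF_mul_mem R ih ht
    set f : ℕ → R := fun d => ∑ i ∈ Finset.range d, t ^ i with hf
    obtain ⟨x, hx⟩ := hCompl f (by
      intro d
      simpa [hf, Finset.sum_range_succ] using hpow d)
    have hgeomL : ∀ d, (1 - t) * f d = 1 - t ^ d := by
      intro d
      have := mul_geom_sum t d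
      calc (1 - t) * f d = -((t - 1) * ∑ i ∈ Finset.range d, t ^ i) := by
            rw [hf]; noncomm_ring
        _ = 1 - t ^ d := by rw [this]; abel
    have hgeomR : ∀ d, f d * (1 - t) = 1 - t ^ d := by
      intro d
      have := geom_sum_mul t d
      calc f d * (1 - t) = -((∑ i ∈ Finset.range d, t ^ i) * (t - 1)) := by
            rw [hf]; noncomm_ring
        _ = 1 - t ^ d := by rw [this]; abel
    have h1 : (1 - t) * x = 1 := by
      have := hHaus ((1 - t) * x - 1) (by
        intro d
        have e : (1 - t) * x - 1 = (1 - t) * (x - f d) - t ^ d := by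
          rw [mul_sub, hgeomL d]; abel
        rw [e]
        exact (ncF R d).sub_mem (ncF_mul_mem_left R _ (hx d)) (hpow d))
      exact sub_eq_zero.1 this
    have h2 : x * (1 - t) = 1 := by
      have := hHaus (x * (1 - t) - 1) (by
        intro d
        have e : x * (1 - t) - 1 = (x - f d) * (1 - t) - t ^ d := by
          rw [sub_mul, hgeomR d]; abel
        rw [e]
        exact (ncF R d).sub_mem (ncF_mul_mem_right R _ (hx d)) (hpow d))
      exact sub_eq_zero.1 this
    exact ⟨⟨1 - t, x, h1, h2⟩, rfl⟩
  -- Step 2: a unit in R_ab lifts to a unit in R.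
  have hlift : ∀ a : R, IsUnit ((a : (abRingCon R).Quotient)) → IsUnit a := by
    intro a ha
    obtain ⟨u, hu⟩ := ha
    obtain ⟨b, hb⟩ := Quotient.exists_rep (↑u⁻¹ : (abRingCon R).Quotient)
    have hb' : (b : (abRingCon R).Quotient) = ↑u⁻¹ := hb
    have hab : (abRingCon R) (a * b) 1 := by
      rw [← RingCon.eq, RingCon.coe_mul, RingCon.coe_one, ← hu, hb', u.mul_inv]
    have hba : (abRingCon R) (b * a) 1 := by
      rw [← RingCon.eq, RingCon.coe_mul, RingCon.coe_one, ← hu, hb', u.inv_mul]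
    have hab' : IsUnit (a * b) := by
      have := key (1 - a * b) (by
        have := (ncF R 1).neg_mem (ab_sub_mem R hab)
        simpa [neg_sub] using this)
      simpa using this
    have hba' : IsUnit (b * a) := by
      have := key (1 - b * a) (by
        have := (ncF R 1).neg_mem (ab_sub_mem R hba)
        simpa [neg_sub] using this)
      simpa using this
    obtain ⟨u1, hu1⟩ := hab'
    obtain ⟨u2, hu2⟩ := hba'
    have har : a * (b * ↑u1⁻¹) = 1 := by
      rw [← mul_assoc, ← hu1, Units.mul_inv]
    have hla : (↑u2⁻¹ * b) * a = 1 := by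
      rw [mul_assoc, ← hu2, Units.inv_mul]
    have heq : (↑u2⁻¹ * b : R) = b * ↑u1⁻¹ := by
      calc (↑u2⁻¹ * b : R) = (↑u2⁻¹ * b) * (a * (b * ↑u1⁻¹)) := by rw [har, mul_one]
        _ = ((↑u2⁻¹ * b) * a) * (b * ↑u1⁻¹) := by noncomm_ring
        _ = b * ↑u1⁻¹ := by rw [hla, one_mul]
    exact ⟨⟨a, b * ↑u1⁻¹, har, by rw [← heq]; exact hla⟩, rfl⟩
  -- Step 3: conclude.
  have : Nontrivial R := by
    refine ⟨0, 1, fun h => ?_⟩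
    have h2 : ((0 : R) : (abRingCon R).Quotient) = ((1 : R) : (abRingCon R).Quotient) := by
      rw [h]
    rw [RingCon.coe_zero, RingCon.coe_one] at h2
    exact zero_ne_one (α := RingAb R) h2
  refine ⟨fun {a b} hab => ?_⟩
  have habQ : ((a : (abRingCon R).Quotient)) + (b : (abRingCon R).Quotient) = 1 := by
    rw [← RingCon.coe_add, hab, RingCon.coe_one]
  have h := hloc.isUnit_or_isUnit_of_add_one (a := ((a : (abRingCon R).Quotient) : RingAb R))
    (b := ((b : (abRingCon R).Quotient) : RingAb R)) habQ
  exact h.imp (hlift a) (hlift b)
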